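/- Let α ∈ [1,2], σ > 0, m ∈ ℝ and R ≥ 0. Define A_α := ∫_ℝ exp(−|x|^α) dx and B_α := ∫_ℝ |x|^{α−1}·exp(−|x|^α/2) dx. Then A_α and B_α are finite and positive, and ∫_{{a ∈ ℝ : |a−m| ≥ R}} (|a−m|^{α−1}/σ^α) · (1/(σ·A_α))·exp(−|a−m|^α/σ^α) da ≤ (B_α/(σ·A_α))·exp(−R^α/(2σ^α)). -/

import Mathlib

open MeasureTheory Set

lemma myIntegrable_comp_abs {f : ℝ → ℝ} (hf : IntegrableOn f (Ioi 0)) :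
    Integrable fun x : ℝ => f |x| := by
  have int_Ioi : IntegrableOn (fun x => f |x|) (Ioi 0) :=
    hf.congr_fun (fun x hx => by rw [abs_of_pos hx]) measurableSet_Ioi
  have int_Iic : IntegrableOn (fun x => f |x|) (Iic 0) := by
    rw [← Measure.map_neg_eq_self (volume : Measure ℝ)]
    have m : MeasurableEmbedding fun x : ℝ => -x := (Homeomorph.neg ℝ).measurableEmbedding
    rw [m.integrableOn_map_iff]
    simp_rw [Function.comp_def, abs_neg, neg_preimage, neg_Iic, neg_zero]
    exact Iff.mpr integrableOn_Ici_iff_integrableOn_Ioi int_Ioi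
  have h := int_Iic.union int_Ioi
  rwa [Iic_union_Ioi, integrableOn_univ] at h

lemma myInt (α : ℝ) (hα : 1 ≤ α) {s b : ℝ} (hs : -1 < s) (hb : 0 < b) :
    Integrable fun x : ℝ => |x| ^ s * Real.exp (-b * |x| ^ α) :=
  myIntegrable_comp_abs (integrableOn_rpow_mul_exp_neg_mul_rpow hs (by linarith) hb)

/-- Tail estimate for the moderate-tailed policy (exploration tolerance computation):
with `A_α = ∫ exp(-|x|^α) dx` and `B_α = ∫ |x|^{α-1} exp(-|x|^α/2) dx`, both finite
and positive, the score-mass of the density `(1/(σA_α)) exp(-|a-m|^α/σ^α)` over the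
tail `{|a-m| ≥ R}` is at most `(B_α/(σA_α)) exp(-R^α/(2σ^α))`. -/
theorem stmt10 (α : ℝ) (hα : α ∈ Set.Icc (1 : ℝ) 2) (σ : ℝ) (hσ : 0 < σ)
    (m R : ℝ) (hR : 0 ≤ R) (Aα Bα : ℝ)
    (hAα : Aα = ∫ x : ℝ, Real.exp (-(|x| ^ α)))
    (hBα : Bα = ∫ x : ℝ, |x| ^ (α - 1) * Real.exp (-(|x| ^ α) / 2)) :
    Integrable (fun x : ℝ => Real.exp (-(|x| ^ α))) ∧ 0 < Aα ∧
    Integrable (fun x : ℝ => |x| ^ (α - 1) * Real.exp (-(|x| ^ α) / 2)) ∧ 0 < Bα ∧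
    ∫ a in {a : ℝ | R ≤ |a - m|},
        (|a - m| ^ (α - 1) / σ ^ α) * ((1 / (σ * Aα)) * Real.exp (-(|a - m| ^ α) / σ ^ α))
      ≤ (Bα / (σ * Aα)) * Real.exp (-(R ^ α) / (2 * σ ^ α)) := by
  obtain ⟨hα1, hα2⟩ := hα
  have hα0 : (0 : ℝ) ≤ α := by linarith
  have hs : (-1 : ℝ) < α - 1 := by linarith
  have hσα : 0 < σ ^ α := Real.rpow_pos_of_pos hσ α
  -- integrability of the A_α integrand
  have e1 : (fun x : ℝ => Real.exp (-(|x| ^ α)))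
      = fun x : ℝ => |x| ^ (0 : ℝ) * Real.exp (-(1 : ℝ) * |x| ^ α) := by
    funext x; rw [Real.rpow_zero, one_mul, neg_one_mul]
  have int1 : Integrable fun x : ℝ => Real.exp (-(|x| ^ α)) := by
    rw [e1]; exact myInt α hα1 (by norm_num) one_pos
  -- integrability of the B_α integrand
  have e2 : (fun x : ℝ => |x| ^ (α - 1) * Real.exp (-(|x| ^ α) / 2))
      = fun x : ℝ => |x| ^ (α - 1) * Real.exp (-(2⁻¹ : ℝ) * |x| ^ α) := by
    funext x
    rw [show -(|x| ^ α) / 2 = -(2⁻¹ : ℝ) * |x| ^ α by ring]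
  have int2 : Integrable fun x : ℝ => |x| ^ (α - 1) * Real.exp (-(|x| ^ α) / 2) := by
    rw [e2]; exact myInt α hα1 hs (by norm_num)
  -- positivity of A_α
  have hA : 0 < Aα := by
    rw [hAα, integral_pos_iff_support_of_nonneg (fun x => (Real.exp_pos _).le) int1]
    have hsupp : Function.support (fun x : ℝ => Real.exp (-(|x| ^ α))) = Set.univ := by
      ext x; simp [Function.mem_support, (Real.exp_pos _).ne']
    rw [hsupp]
    simp [Real.volume_univ]
  -- positivity of B_α
  have hB : 0 < Bα := by
    have hnn : (0 : ℝ → ℝ) ≤ fun x : ℝ => |x| ^ (α - 1) * Real.exp (-(|x| ^ α) / 2) :=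
      fun x => mul_nonneg (Real.rpow_nonneg (abs_nonneg _) _) (Real.exp_pos _).le
    rw [hBα, integral_pos_iff_support_of_nonneg hnn int2]
    have hsub : Set.Ioi (0 : ℝ)
        ⊆ Function.support (fun x : ℝ => |x| ^ (α - 1) * Real.exp (-(|x| ^ α) / 2)) := by
      intro x hx
      have hx' : 0 < |x| := abs_pos.2 (ne_of_gt hx)
      exact (mul_pos (Real.rpow_pos_of_pos hx' _) (Real.exp_pos _)).ne'
    refine lt_of_lt_of_le ?_ (measure_mono hsub)
    rw [Real.volume_Ioi]
    exact ENNReal.zero_lt_top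
  refine ⟨int1, hA, int2, hB, ?_⟩
  -- the tail estimate
  set C : ℝ := Real.exp (-(R ^ α) / (2 * σ ^ α)) / (σ ^ α * (σ * Aα)) with hC
  have hD : (0 : ℝ) ≤ 1 / (σ ^ α * (σ * Aα)) :=
    le_of_lt (by positivity)
  have hC0 : 0 ≤ C := div_nonneg (Real.exp_pos _).le (by positivity)
  have hb2 : (0 : ℝ) < 1 / (2 * σ ^ α) := by positivity
  have hGint : Integrable
      (fun a : ℝ => C * (|a - m| ^ (α - 1) * Real.exp (-(1 / (2 * σ ^ α)) * |a - m| ^ α))) :=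
    ((myInt α hα1 hs hb2).comp_sub_right m).const_mul C
  have hG0 : ∀ a : ℝ,
      0 ≤ C * (|a - m| ^ (α - 1) * Real.exp (-(1 / (2 * σ ^ α)) * |a - m| ^ α)) := fun a =>
    mul_nonneg hC0 (mul_nonneg (Real.rpow_nonneg (abs_nonneg _) _) (Real.exp_pos _).le)
  -- integrability of the integrand
  have hFeq : (fun a : ℝ =>
      (|a - m| ^ (α - 1) / σ ^ α) * ((1 / (σ * Aα)) * Real.exp (-(|a - m| ^ α) / σ ^ α)))
      = fun a : ℝ => (1 / (σ ^ α * (σ * Aα)))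
          * (|a - m| ^ (α - 1) * Real.exp (-(1 / σ ^ α) * |a - m| ^ α)) := by
    funext a
    rw [show -(|a - m| ^ α) / σ ^ α = -(1 / σ ^ α) * |a - m| ^ α by ring]
    ring
  have hFint : Integrable (fun a : ℝ =>
      (|a - m| ^ (α - 1) / σ ^ α) * ((1 / (σ * Aα)) * Real.exp (-(|a - m| ^ α) / σ ^ α))) := by
    rw [hFeq]
    exact ((myInt α hα1 hs (by positivity)).comp_sub_right m).const_mul _
  -- measurability of the tail set
  have hS : MeasurableSet {a : ℝ | R ≤ |a - m|} := by
    have hcont : Continuous fun a : ℝ => |a - m| := (continuous_id.sub continuous_const).abs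
    exact measurableSet_le measurable_const hcont.measurable
  -- pointwise bound on the tail set
  have key : ∀ a ∈ {a : ℝ | R ≤ |a - m|},
      (|a - m| ^ (α - 1) / σ ^ α) * ((1 / (σ * Aα)) * Real.exp (-(|a - m| ^ α) / σ ^ α))
        ≤ C * (|a - m| ^ (α - 1) * Real.exp (-(1 / (2 * σ ^ α)) * |a - m| ^ α)) := by
    intro a ha
    have hu : (0 : ℝ) ≤ |a - m| := abs_nonneg _
    have hRu : R ^ α ≤ |a - m| ^ α := Real.rpow_le_rpow hR ha hα0
    have hsplit : Real.exp (-(|a - m| ^ α) / σ ^ α)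
        = Real.exp (-(1 / (2 * σ ^ α)) * |a - m| ^ α)
          * Real.exp (-(|a - m| ^ α) / (2 * σ ^ α)) := by
      rw [← Real.exp_add]
      congr 1
      field_simp
      ring
    have hexp : Real.exp (-(|a - m| ^ α) / (2 * σ ^ α))
        ≤ Real.exp (-(R ^ α) / (2 * σ ^ α)) :=
      Real.exp_le_exp.mpr
        ((div_le_div_iff_of_pos_right (by positivity : (0 : ℝ) < 2 * σ ^ α)).mpr (neg_le_neg hRu))
    calc (|a - m| ^ (α - 1) / σ ^ α) * ((1 / (σ * Aα)) * Real.exp (-(|a - m| ^ α) / σ ^ α))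
        = (|a - m| ^ (α - 1) * Real.exp (-(1 / (2 * σ ^ α)) * |a - m| ^ α))
            * (Real.exp (-(|a - m| ^ α) / (2 * σ ^ α)) * (1 / (σ ^ α * (σ * Aα)))) := by
          rw [hsplit]; ring
      _ ≤ (|a - m| ^ (α - 1) * Real.exp (-(1 / (2 * σ ^ α)) * |a - m| ^ α))
            * (Real.exp (-(R ^ α) / (2 * σ ^ α)) * (1 / (σ ^ α * (σ * Aα)))) :=
          mul_le_mul_of_nonneg_left (mul_le_mul_of_nonneg_right hexp hD)
            (mul_nonneg (Real.rpow_nonneg hu _) (Real.exp_pos _).le)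
      _ = C * (|a - m| ^ (α - 1) * Real.exp (-(1 / (2 * σ ^ α)) * |a - m| ^ α)) := by
          rw [hC]; ring
  -- the substitution computation
  have hσα1 : (0 : ℝ) < σ ^ (α - 1) := Real.rpow_pos_of_pos hσ _
  have hpt : ∀ x : ℝ, |x| ^ (α - 1) * Real.exp (-(1 / (2 * σ ^ α)) * |x| ^ α)
      = σ ^ (α - 1) * (|x / σ| ^ (α - 1) * Real.exp (-(|x / σ| ^ α) / 2)) := by
    intro x
    have h1 : |x / σ| = |x| / σ := by rw [abs_div, abs_of_pos hσ]
    rw [h1, Real.div_rpow (abs_nonneg x) hσ.le, Real.div_rpow (abs_nonneg x) hσ.le]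
    have harg : -(|x| ^ α / σ ^ α) / 2 = -(1 / (2 * σ ^ α)) * |x| ^ α := by
      field_simp
    rw [harg]
    field_simp
  have hsubI : (∫ x : ℝ, |x| ^ (α - 1) * Real.exp (-(1 / (2 * σ ^ α)) * |x| ^ α))
      = σ ^ α * Bα := by
    calc (∫ x : ℝ, |x| ^ (α - 1) * Real.exp (-(1 / (2 * σ ^ α)) * |x| ^ α))
        = ∫ x : ℝ, σ ^ (α - 1)
            * ((fun y : ℝ => |y| ^ (α - 1) * Real.exp (-(|y| ^ α) / 2)) (x / σ)) := by
          simp_rw [hpt]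
      _ = σ ^ (α - 1) * ∫ x : ℝ,
            (fun y : ℝ => |y| ^ (α - 1) * Real.exp (-(|y| ^ α) / 2)) (x / σ) :=
          integral_const_mul _ _
      _ = σ ^ (α - 1) * (|σ| • ∫ y : ℝ, |y| ^ (α - 1) * Real.exp (-(|y| ^ α) / 2)) := by
          rw [Measure.integral_comp_div (fun y : ℝ => |y| ^ (α - 1) * Real.exp (-(|y| ^ α) / 2)) σ]
      _ = σ ^ (α - 1) * (σ * Bα) := by
          rw [smul_eq_mul, abs_of_pos hσ, ← hBα]
      _ = σ ^ α * Bα := by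
          rw [show σ ^ (α - 1) * (σ * Bα) = σ ^ (α - 1) * σ ^ (1 : ℝ) * Bα by
            rw [Real.rpow_one]; ring, ← Real.rpow_add hσ]
          norm_num
  -- putting everything together
  calc ∫ a in {a : ℝ | R ≤ |a - m|},
        (|a - m| ^ (α - 1) / σ ^ α) * ((1 / (σ * Aα)) * Real.exp (-(|a - m| ^ α) / σ ^ α))
      ≤ ∫ a in {a : ℝ | R ≤ |a - m|},
          C * (|a - m| ^ (α - 1) * Real.exp (-(1 / (2 * σ ^ α)) * |a - m| ^ α)) :=
        setIntegral_mono_on hFint.integrableOn hGint.integrableOn hS key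
    _ ≤ ∫ a : ℝ, C * (|a - m| ^ (α - 1) * Real.exp (-(1 / (2 * σ ^ α)) * |a - m| ^ α)) :=
        setIntegral_le_integral hGint (Filter.Eventually.of_forall hG0)
    _ = C * ∫ a : ℝ, |a - m| ^ (α - 1) * Real.exp (-(1 / (2 * σ ^ α)) * |a - m| ^ α) :=
        integral_const_mul _ _
    _ = C * ∫ x : ℝ, |x| ^ (α - 1) * Real.exp (-(1 / (2 * σ ^ α)) * |x| ^ α) := by
        rw [integral_sub_right_eq_self
          (fun x : ℝ => |x| ^ (α - 1) * Real.exp (-(1 / (2 * σ ^ α)) * |x| ^ α)) m]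
    _ = C * (σ ^ α * Bα) := by rw [hsubI]
    _ = (Bα / (σ * Aα)) * Real.exp (-(R ^ α) / (2 * σ ^ α)) := by
        rw [hC]
        field_simp
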